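/- Two finite-state machines M_I (independent) and M_D (dependent) obtained from orthogonal, input-preserving partitions (π_I, π_D) of a machine M jointly simulate M: for every input sequence x₁…x_t, if M reaches state q after reading the sequence, then M_I reaches the block B_I(q) ∈ π_I and M_D reaches the block B_D(q) ∈ π_D, and hence q = χ(B_I(q), B_D(q)) is recoverable. -/
import Mathlib


/-- The independent and dependent quotient machines jointly simulate `M`:
if `πI`, `πD` are orthogonal input-preserving partitions of the state set of a
deterministic machine with transition function `T` and start state `s0`, with
induced block transition functions `TI`, `TD` and start blocks `B0`, `C0`, then
after any input sequence `xs` the state reached by `M` lies in the blocks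
reached by the two quotient machines, and it is the unique element of their
intersection (hence recoverable as `χ` of the two reached blocks). -/
theorem quotient_machines_simulate {S I : Type*} [Fintype S] [DecidableEq S]
    (T : S → I → S) (s0 : S)
    (πI πD : Finpartition (Finset.univ : Finset S))
    (horth : ∀ B ∈ πI.parts, ∀ C ∈ πD.parts, (B ∩ C).card ≤ 1)
    (TI TD : Finset S → I → Finset S)
    (hTI : ∀ B ∈ πI.parts, ∀ x, TI B x ∈ πI.parts ∧ ∀ q ∈ B, T q x ∈ TI B x)
    (hTD : ∀ C ∈ πD.parts, ∀ x, TD C x ∈ πD.parts ∧ ∀ q ∈ C, T q x ∈ TD C x)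
    (B0 : Finset S) (hB0 : B0 ∈ πI.parts ∧ s0 ∈ B0)
    (C0 : Finset S) (hC0 : C0 ∈ πD.parts ∧ s0 ∈ C0) :
    ∀ xs : List I,
      xs.foldl T s0 ∈ xs.foldl TI B0 ∧
      xs.foldl T s0 ∈ xs.foldl TD C0 ∧
      xs.foldl TI B0 ∩ xs.foldl TD C0 = {xs.foldl T s0} := by
  have key : ∀ xs : List I, ∀ s B C, B ∈ πI.parts → s ∈ B → C ∈ πD.parts → s ∈ C →
      xs.foldl TI B ∈ πI.parts ∧ xs.foldl T s ∈ xs.foldl TI B ∧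
      xs.foldl TD C ∈ πD.parts ∧ xs.foldl T s ∈ xs.foldl TD C := by
    intro xs
    induction xs with
    | nil => intro s B C hB hsB hC hsC; exact ⟨hB, hsB, hC, hsC⟩
    | cons x xs ih =>
      intro s B C hB hsB hC hsC
      simp only [List.foldl_cons]
      exact ih (T s x) (TI B x) (TD C x) (hTI B hB x).1 ((hTI B hB x).2 s hsB)
        (hTD C hC x).1 ((hTD C hC x).2 s hsC)
  intro xs
  obtain ⟨hBp, hmemB, hCp, hmemC⟩ := key xs s0 B0 C0 hB0.1 hB0.2 hC0.1 hC0.2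
  refine ⟨hmemB, hmemC, ?_⟩
  have hmem : xs.foldl T s0 ∈ xs.foldl TI B0 ∩ xs.foldl TD C0 :=
    Finset.mem_inter.2 ⟨hmemB, hmemC⟩
  have hcard := horth _ hBp _ hCp
  apply Finset.eq_singleton_iff_unique_mem.2
  exact ⟨hmem, fun y hy => Finset.card_le_one.1 hcard y hy _ hmem⟩
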